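/- arXiv:2409.08768 — 4 statements merged into one kernel-verified Lean document; each statement's English description precedes it below -/
import Mathlib

section
/- Let T > 0 and let v : [0,T] × ℝ^n → ℝ^n be a Borel time-dependent vector field. Let φ : [0,T] × ℝ^n → ℝ^n be jointly continuous with φ(0,x) = x for all x, and suppose that for every x ∈ ℝ^n and t ∈ [0,T] the curve s ↦ φ(s,x) is differentiable at t with derivative v(t, φ(t,x)). Let ρ be a Borel probability measure on ℝ^n, define ρ_t = φ(t,·)#ρ, and assume ∫_0^T ∫_{ℝ^n} |v(t, φ(t,x))| dρ(x) dt < ∞. Then the family (ρ_t)_{t∈[0,T]} together with v satisfies the weak continuity equation. -/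
open MeasureTheory
open scoped RealInnerProductSpace ENNReal

lemma integrable_of_bound' {α : Type*} [MeasurableSpace α] {μ : Measure α} [IsFiniteMeasure μ]
    {G : α → ℝ} {u : α → ℝ≥0∞} (hG : AEStronglyMeasurable G μ) (hu : ∫⁻ a, u a ∂μ < ⊤)
    {C : ℝ} (hbound : ∀ a, (‖G a‖₊ : ℝ≥0∞) ≤ ENNReal.ofReal C * (u a + 1)) :
    Integrable G μ := by
  refine ⟨hG, ?_⟩
  show ∫⁻ a, (‖G a‖₊ : ℝ≥0∞) ∂μ < ⊤
  calc ∫⁻ a, (‖G a‖₊ : ℝ≥0∞) ∂μ ≤ ∫⁻ a, ENNReal.ofReal C * (u a + 1) ∂μ := lintegral_mono hbound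
    _ = ENNReal.ofReal C * (∫⁻ a, u a ∂μ + μ Set.univ) := by
        rw [lintegral_const_mul' _ _ ENNReal.ofReal_ne_top,
          lintegral_add_right _ measurable_const, lintegral_const, one_mul]
    _ < ⊤ := by
        refine ENNReal.mul_lt_top ENNReal.ofReal_lt_top ?_
        exact ENNReal.add_lt_top.2 ⟨hu, measure_lt_top μ _⟩

section aux
variable {n : ℕ}
local notation "En" => EuclideanSpace ℝ (Fin n)

lemma key_identity (φ : En × ℝ → ℝ) (hφ : ContDiff ℝ 1 φ) (y : En) (t : ℝ) (w : En) :
    deriv (fun s => φ (y, s)) t + ⟪w, gradient (fun y' => φ (y', t)) y⟫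
      = fderiv ℝ φ (y, t) (w, 1) := by
  have hφd : Differentiable ℝ φ := hφ.differentiable one_ne_zero
  have h1 : HasDerivAt (fun s => φ (y, s)) (fderiv ℝ φ (y, t) (0, 1)) t := by
    have hd : HasDerivAt (fun s : ℝ => ((y : En), s)) ((0 : En), (1 : ℝ)) t :=
      (hasDerivAt_const t y).prodMk (hasDerivAt_id t)
    exact (hφd (y, t)).hasFDerivAt.comp_hasDerivAt t hd
  have h2 : HasFDerivAt (fun y' => φ (y', t))
      ((fderiv ℝ φ (y, t)).comp (ContinuousLinearMap.inl ℝ En ℝ)) y :=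
    (hφd (y, t)).hasFDerivAt.comp y (hasFDerivAt_prodMk_left y t)
  have h3 : ⟪w, gradient (fun y' => φ (y', t)) y⟫ = fderiv ℝ φ (y, t) (w, 0) := by
    rw [real_inner_comm, gradient, h2.fderiv, InnerProductSpace.toDual_symm_apply]
    rfl
  rw [h1.deriv, h3, ← map_add]
  norm_num

end aux

/-- The family of Borel probability measures `ρ t`, `t ∈ [0,T]`, together with the
time-dependent vector field `v` satisfies the weak continuity equation
`∂ₜ ρₜ + div (vₜ ρₜ) = 0` if for every `C¹` test function `φ(x,t)` with compact support
contained in `ℝⁿ × (0,T)`,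
`∫_0^T ∫ (∂ₜ φ(x,t) + ⟨v(t,x), ∇ₓ φ(x,t)⟩) dρₜ(x) dt = 0`. -/
def WeakContinuityEquation (n : ℕ) (T : ℝ)
    (ρ : ℝ → Measure (EuclideanSpace ℝ (Fin n)))
    (v : ℝ → EuclideanSpace ℝ (Fin n) → EuclideanSpace ℝ (Fin n)) : Prop :=
  ∀ φ : EuclideanSpace ℝ (Fin n) × ℝ → ℝ,
    ContDiff ℝ 1 φ → HasCompactSupport φ →
    tsupport φ ⊆ Set.univ ×ˢ Set.Ioo 0 T →
    (∫ t in Set.Icc (0 : ℝ) T, ∫ x, (deriv (fun s => φ (x, s)) t +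
      ⟪v t x, gradient (fun y => φ (y, t)) x⟫) ∂(ρ t)) = 0

/-- The pushforward `ρ_t = Φ(t,·)#ρ` of an initial probability measure `ρ`
along the flow `Φ` of a Borel vector field `v` solves the weak continuity equation. -/
theorem flow_pushforward_solves_continuity_equation (n : ℕ) (T : ℝ) (hT : 0 < T)
    (v : ℝ → EuclideanSpace ℝ (Fin n) → EuclideanSpace ℝ (Fin n))
    (hv : Measurable (Function.uncurry v))
    (Φ : ℝ → EuclideanSpace ℝ (Fin n) → EuclideanSpace ℝ (Fin n))
    (hΦc : ContinuousOn (Function.uncurry Φ) (Set.Icc (0 : ℝ) T ×ˢ Set.univ))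
    (hΦ0 : ∀ x, Φ 0 x = x)
    (hΦd : ∀ x, ∀ t ∈ Set.Icc (0 : ℝ) T,
      HasDerivWithinAt (fun s => Φ s x) (v t (Φ t x)) (Set.Icc (0 : ℝ) T) t)
    (ρ : Measure (EuclideanSpace ℝ (Fin n))) [IsProbabilityMeasure ρ]
    (hint : (∫⁻ t in Set.Icc (0 : ℝ) T, ∫⁻ x, (‖v t (Φ t x)‖₊ : ℝ≥0∞) ∂ρ) < ⊤) :
    WeakContinuityEquation n T (fun t => ρ.map (Φ t)) v := by
  intro φ hφ hφsupp hφss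
  -- a globally continuous version of the flow
  set Ψ : ℝ × EuclideanSpace ℝ (Fin n) → EuclideanSpace ℝ (Fin n) :=
    fun p => Φ (max 0 (min p.1 T)) p.2 with hΨdef
  have hΨ : Continuous Ψ := by
    have hproj : Continuous (fun p : ℝ × EuclideanSpace ℝ (Fin n) =>
        ((max 0 (min p.1 T), p.2) : ℝ × EuclideanSpace ℝ (Fin n))) :=
      (continuous_const.max (continuous_fst.min continuous_const)).prodMk continuous_snd
    have := hΦc.comp_continuous hproj (fun p =>
      ⟨⟨le_max_left _ _, max_le hT.le (min_le_right _ _)⟩, Set.mem_univ _⟩)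
    exact this
  have hΨeq : ∀ t ∈ Set.Icc (0 : ℝ) T, ∀ x, Ψ (t, x) = Φ t x := by
    intro t ht x
    simp only [hΨdef]
    rw [min_eq_left ht.2, max_eq_right ht.1]
  -- the integrand, expressed via `Ψ`
  set G : ℝ × EuclideanSpace ℝ (Fin n) → ℝ :=
    fun p => fderiv ℝ φ (Ψ p, p.1) (v p.1 (Ψ p), 1) with hGdef
  set w : ℝ × EuclideanSpace ℝ (Fin n) → ℝ≥0∞ :=
    fun p => (‖v p.1 (Ψ p)‖₊ : ℝ≥0∞) with hwdef
  have hvΨ : Measurable (fun p : ℝ × EuclideanSpace ℝ (Fin n) => v p.1 (Ψ p)) :=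
    hv.comp (measurable_fst.prodMk hΨ.measurable)
  have hw_m : Measurable w := hvΨ.nnnorm.coe_nnreal_ennreal
  have hφf : Continuous (fderiv ℝ φ) := hφ.continuous_fderiv one_ne_zero
  have hGsm : StronglyMeasurable G := by
    have h1 : StronglyMeasurable
        (fun p : ℝ × EuclideanSpace ℝ (Fin n) => fderiv ℝ φ (Ψ p, p.1)) :=
      (hφf.comp (hΨ.prodMk continuous_fst)).stronglyMeasurable
    have h2 : StronglyMeasurable (fun p : ℝ × EuclideanSpace ℝ (Fin n) =>
        ((v p.1 (Ψ p), (1 : ℝ)) : EuclideanSpace ℝ (Fin n) × ℝ)) :=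
      (hvΨ.prodMk measurable_const).stronglyMeasurable
    exact (isBoundedBilinearMap_apply (𝕜 := ℝ)
      (E := EuclideanSpace ℝ (Fin n) × ℝ) (F := ℝ)).continuous.comp_stronglyMeasurable
      (h1.prodMk h2)
  -- a uniform bound on the derivative of `φ`
  obtain ⟨C, hC⟩ := hφf.bounded_above_of_compact_support (hφsupp.fderiv (𝕜 := ℝ))
  have hC0 : (0 : ℝ) ≤ C := (norm_nonneg (fderiv ℝ φ (0, 0))).trans (hC (0, 0))
  have hGb : ∀ p : ℝ × EuclideanSpace ℝ (Fin n),
      (‖G p‖₊ : ℝ≥0∞) ≤ ENNReal.ofReal C * (w p + 1) := by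
    intro p
    have h0 : ‖G p‖ ≤ C * (‖v p.1 (Ψ p)‖ + 1) := by
      have h1 := (fderiv ℝ φ (Ψ p, p.1)).le_opNorm ((v p.1 (Ψ p), (1 : ℝ)))
      have h2 : ‖((v p.1 (Ψ p), (1 : ℝ)) : EuclideanSpace ℝ (Fin n) × ℝ)‖
          ≤ ‖v p.1 (Ψ p)‖ + 1 := by
        have hnp : ‖((v p.1 (Ψ p), (1 : ℝ)) : EuclideanSpace ℝ (Fin n) × ℝ)‖
            = max ‖v p.1 (Ψ p)‖ ‖(1 : ℝ)‖ := rfl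
        rw [hnp, norm_one]
        exact max_le (le_add_of_nonneg_right zero_le_one)
          (le_add_of_nonneg_left (norm_nonneg _))
      simp only [hGdef]
      exact h1.trans (mul_le_mul (hC _) h2 (norm_nonneg _)
        hC0)
    calc (‖G p‖₊ : ℝ≥0∞) = ENNReal.ofReal ‖G p‖ := (ofReal_norm _).symm
      _ ≤ ENNReal.ofReal (C * (‖v p.1 (Ψ p)‖ + 1)) := ENNReal.ofReal_le_ofReal h0
      _ = ENNReal.ofReal C * (w p + 1) := by
          rw [ENNReal.ofReal_mul hC0,
            ENNReal.ofReal_add (norm_nonneg _) zero_le_one, ENNReal.ofReal_one,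
            ofReal_norm, enorm_eq_nnnorm]
  haveI : IsFiniteMeasure (volume.restrict (Set.Icc (0 : ℝ) T)) :=
    ⟨by rw [Measure.restrict_apply_univ, Real.volume_Icc]; exact ENNReal.ofReal_lt_top⟩
  -- finiteness from the hypothesis `hint`
  have hint' : (∫⁻ t in Set.Icc (0 : ℝ) T, ∫⁻ x, w (t, x) ∂ρ) < ⊤ := by
    refine lt_of_eq_of_lt ?_ hint
    refine setLIntegral_congr_fun measurableSet_Icc (fun t ht => ?_)
    exact lintegral_congr fun x => by simp only [hwdef]; rw [hΨeq t ht x]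
  have hwprod : AEMeasurable (Function.uncurry fun t (x : EuclideanSpace ℝ (Fin n)) => w (t, x))
      ((volume.restrict (Set.Icc (0 : ℝ) T)).prod ρ) := hw_m.aemeasurable
  have hswap := lintegral_lintegral_swap hwprod
  have hfin : ∀ᵐ x ∂ρ, (∫⁻ t in Set.Icc (0 : ℝ) T, w (t, x)) < ⊤ := by
    refine ae_lt_top (hw_m.lintegral_prod_left') ?_
    rw [← hswap]
    exact hint'.ne
  have hGint : Integrable G ((volume.restrict (Set.Icc (0 : ℝ) T)).prod ρ) := by
    refine integrable_of_bound' hGsm.aestronglyMeasurable ?_ hGb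
    rw [lintegral_prod _ hw_m.aemeasurable]
    exact hint'
  -- chain rule
  have hφd : Differentiable ℝ φ := hφ.differentiable one_ne_zero
  have hchain : ∀ x, ∀ t ∈ Set.Icc (0 : ℝ) T,
      HasDerivWithinAt (fun s => φ (Φ s x, s)) (G (t, x)) (Set.Icc (0 : ℝ) T) t := by
    intro x t ht
    have h1 : HasDerivWithinAt
        (fun s => ((Φ s x, s) : EuclideanSpace ℝ (Fin n) × ℝ)) (v t (Φ t x), 1)
        (Set.Icc (0 : ℝ) T) t := (hΦd x t ht).prodMk (hasDerivWithinAt_id t _)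
    have h2 := HasFDerivAt.comp_hasDerivWithinAt_of_eq t (hφd (Φ t x, t)).hasFDerivAt h1 rfl
    simpa only [hGdef, hΨeq t ht x, Function.comp_def] using h2
  -- FTC for a.e. x
  have hFTC : ∀ᵐ x ∂ρ, (∫ t in Set.Icc (0 : ℝ) T, G (t, x)) = 0 := by
    filter_upwards [hfin] with x hx
    have hIntx : IntegrableOn (fun t => G (t, x)) (Set.Icc (0 : ℝ) T) volume := by
      refine integrable_of_bound' ?_ hx (fun t => hGb (t, x))
      exact (hGsm.comp_measurable (measurable_id.prodMk measurable_const)).aestronglyMeasurable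
    have hcont : ContinuousOn (fun s => φ (Φ s x, s)) (Set.Icc (0 : ℝ) T) :=
      fun t ht => (hchain x t ht).continuousWithinAt
    have hderiv : ∀ t ∈ Set.Ioo (0 : ℝ) T,
        HasDerivWithinAt (fun s => φ (Φ s x, s)) (G (t, x)) (Set.Ioi t) t := fun t ht =>
      ((hchain x t (Set.Ioo_subset_Icc_self ht)).hasDerivAt
        (Icc_mem_nhds ht.1 ht.2)).hasDerivWithinAt
    have hftc := intervalIntegral.integral_eq_sub_of_hasDeriv_right_of_le hT.le hcont hderiv
      ((intervalIntegrable_iff_integrableOn_Icc_of_le hT.le).2 hIntx)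
    have h0 : φ (Φ 0 x, 0) = 0 := by
      apply image_eq_zero_of_notMem_tsupport
      intro h
      exact absurd ((hφss h).2).1 (lt_irrefl (0 : ℝ))
    have hTT : φ (Φ T x, T) = 0 := by
      apply image_eq_zero_of_notMem_tsupport
      intro h
      exact absurd ((hφss h).2).2 (lt_irrefl T)
    rw [MeasureTheory.integral_Icc_eq_integral_Ioc, ← intervalIntegral.integral_of_le hT.le,
      hftc, h0, hTT, sub_zero]
  -- rewrite the inner integral
  have hmain : ∀ t ∈ Set.Icc (0 : ℝ) T,
      (∫ x, (deriv (fun s => φ (x, s)) t +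
        ⟪v t x, gradient (fun y => φ (y, t)) x⟫) ∂(ρ.map (Φ t))) = ∫ x, G (t, x) ∂ρ := by
    intro t ht
    have hΦtc : Continuous (Φ t) := by
      have he : (Φ t) = fun x => Ψ (t, x) := funext fun x => (hΨeq t ht x).symm
      rw [he]
      exact hΨ.comp (continuous_const.prodMk continuous_id)
    have hk : StronglyMeasurable
        (fun y : EuclideanSpace ℝ (Fin n) => fderiv ℝ φ (y, t) (v t y, 1)) := by
      have h1 : StronglyMeasurable
          (fun y : EuclideanSpace ℝ (Fin n) => fderiv ℝ φ (y, t)) :=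
        (hφf.comp (continuous_id.prodMk continuous_const)).stronglyMeasurable
      have h2 : StronglyMeasurable (fun y : EuclideanSpace ℝ (Fin n) =>
          ((v t y, (1 : ℝ)) : EuclideanSpace ℝ (Fin n) × ℝ)) :=
        ((hv.comp (measurable_const.prodMk measurable_id)).prodMk
          measurable_const).stronglyMeasurable
      exact (isBoundedBilinearMap_apply (𝕜 := ℝ)
        (E := EuclideanSpace ℝ (Fin n) × ℝ) (F := ℝ)).continuous.comp_stronglyMeasurable
        (h1.prodMk h2)
    calc (∫ x, (deriv (fun s => φ (x, s)) t +
          ⟪v t x, gradient (fun y => φ (y, t)) x⟫) ∂(ρ.map (Φ t)))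
        = ∫ y, fderiv ℝ φ (y, t) (v t y, 1) ∂(ρ.map (Φ t)) :=
          integral_congr_ae (ae_of_all _ fun y => key_identity φ hφ y t (v t y))
      _ = ∫ x, fderiv ℝ φ (Φ t x, t) (v t (Φ t x), 1) ∂ρ :=
          integral_map hΦtc.aemeasurable hk.aestronglyMeasurable
      _ = ∫ x, G (t, x) ∂ρ := by
          refine integral_congr_ae (ae_of_all _ fun x => ?_)
          simp only [hGdef, hΨeq t ht x]
  calc (∫ t in Set.Icc (0 : ℝ) T, ∫ x, (deriv (fun s => φ (x, s)) t +
        ⟪v t x, gradient (fun y => φ (y, t)) x⟫) ∂(ρ.map (Φ t)))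
      = ∫ t in Set.Icc (0 : ℝ) T, ∫ x, G (t, x) ∂ρ :=
        setIntegral_congr_fun measurableSet_Icc fun t ht => hmain t ht
    _ = ∫ x, (∫ t in Set.Icc (0 : ℝ) T, G (t, x)) ∂ρ := integral_integral_swap hGint
    _ = 0 := integral_eq_zero_of_ae hFTC
end

section
/- Let T > 0 and let f : ℝ^n → ℝ^m be continuously differentiable, injective, and proper (preimages of compact sets are compact). Let (ρ_t)_{t∈[0,T]} be Borel probability measures on ℝ^n and v : [0,T] × ℝ^n → ℝ^n a Borel vector field with ∫_0^T ∫ |v(t,x)| dρ_t(x) dt < ∞ such that (ρ_t, v) satisfies the weak continuity equation on ℝ^n. Let g : ℝ^m → ℝ^n be any function with g(f(x)) = x for all x, define ν_t = f#ρ_t and w : [0,T] × ℝ^m → ℝ^m by w(t,y) = Df_{g(y)}(v(t, g(y))). Then (ν_t, w) satisfies the weak continuity equation on ℝ^m: for every continuously differentiable φ : ℝ^m × [0,T] → ℝ with compact support contained in ℝ^m × (0,T), ∫_0^T ∫_{ℝ^m} (∂_t φ(y,t) + ⟨w(t,y), ∇_y φ(y,t)⟩) dν_t(y) dt = 0. 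-/
open MeasureTheory
open scoped RealInnerProductSpace ENNReal

lemma inner_gradient_eq {E : Type*} [NormedAddCommGroup E] [InnerProductSpace ℝ E]
    [CompleteSpace E] (h : E → ℝ) (x u : E) :
    ⟪gradient h x, u⟫ = fderiv ℝ h x u := by
  rw [gradient, InnerProductSpace.toDual_symm_apply]


/-- If `(ρ_t, v)` satisfies the weak continuity equation on `ℝⁿ` and
`f : ℝⁿ → ℝᵐ` is `C¹`, injective and proper, then the pushforward curve `ν_t = f#ρ_t`
together with the transported velocity field `w(t,y) = Df_{f⁻¹(y)}(v(t, f⁻¹(y)))` satisfies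
the weak continuity equation on `ℝᵐ`. -/
theorem pushforward_satisfies_continuity_equation (n m : ℕ) (T : ℝ) (hT : 0 < T)
    (f : EuclideanSpace ℝ (Fin n) → EuclideanSpace ℝ (Fin m))
    (hf : ContDiff ℝ 1 f) (hinj : Function.Injective f)
    (hproper : ∀ K : Set (EuclideanSpace ℝ (Fin m)), IsCompact K → IsCompact (f ⁻¹' K))
    (ρ : ℝ → Measure (EuclideanSpace ℝ (Fin n)))
    (hρ : ∀ t, IsProbabilityMeasure (ρ t))
    (v : ℝ → EuclideanSpace ℝ (Fin n) → EuclideanSpace ℝ (Fin n))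
    (hv : Measurable (Function.uncurry v))
    (hint : (∫⁻ t in Set.Icc (0 : ℝ) T, ∫⁻ x, (‖v t x‖₊ : ℝ≥0∞) ∂(ρ t)) < ⊤)
    (hCE : WeakContinuityEquation n T ρ v)
    (g : EuclideanSpace ℝ (Fin m) → EuclideanSpace ℝ (Fin n))
    (hg : ∀ x, g (f x) = x) :
    WeakContinuityEquation m T (fun t => (ρ t).map f)
      (fun t y => fderiv ℝ f (g y) (v t (g y))) := by
  have hfc : Continuous f := hf.continuous
  have hprop : IsProperMap f :=
    isProperMap_iff_isCompact_preimage.2 ⟨hfc, fun {K} hK => hproper K hK⟩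
  have hme : MeasurableEmbedding f :=
    (Topology.IsClosedEmbedding.of_continuous_injective_isClosedMap hfc hinj
      hprop.isClosedMap).measurableEmbedding
  intro φ hφ hφc hφs
  set F : EuclideanSpace ℝ (Fin n) × ℝ → EuclideanSpace ℝ (Fin m) × ℝ :=
    fun p => (f p.1, p.2) with hFdef
  have hF : ContDiff ℝ 1 F := (hf.comp contDiff_fst).prodMk contDiff_snd
  set ψ : EuclideanSpace ℝ (Fin n) × ℝ → ℝ := fun p => φ (F p) with hψdef
  have hψ : ContDiff ℝ 1 ψ := hφ.comp hF
  have hsub : tsupport ψ ⊆ F ⁻¹' tsupport φ := by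
    apply closure_minimal _ ((isClosed_tsupport φ).preimage hF.continuous)
    intro p hp
    exact subset_closure (by simpa [ψ] using hp)
  have hψc : HasCompactSupport ψ := by
    have hFp : IsProperMap F := by
      have := hprop.prodMap (isProperMap_id (X := ℝ))
      exact this
    exact ((hFp.isCompact_preimage hφc).of_isClosed_subset (isClosed_tsupport ψ) hsub)
  have hψs : tsupport ψ ⊆ Set.univ ×ˢ Set.Ioo 0 T := by
    intro p hp
    have := hφs (hsub hp)
    exact ⟨trivial, this.2⟩
  have key := hCE ψ hψ hψc hψs
  have heq : ∀ t, (∫ y, (deriv (fun s => φ (y, s)) t +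
        ⟪fderiv ℝ f (g y) (v t (g y)), gradient (fun z => φ (z, t)) y⟫) ∂((ρ t).map f))
      = ∫ x, (deriv (fun s => ψ (x, s)) t +
        ⟪v t x, gradient (fun y => ψ (y, t)) x⟫) ∂(ρ t) := by
    intro t
    rw [hme.integral_map]
    refine integral_congr_ae (Filter.Eventually.of_forall fun x => ?_)
    simp only [hg]
    congr 1
    -- chain rule for the gradient term
    have hφt : DifferentiableAt ℝ (fun z => φ (z, t)) (f x) :=
      (hφ.comp (contDiff_id.prodMk contDiff_const)).differentiable one_ne_zero |>.differentiableAt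
    have hfx : DifferentiableAt ℝ f x := hf.differentiable one_ne_zero x
    have hcomp : (fun y => ψ (y, t)) = (fun z => φ (z, t)) ∘ f := rfl
    rw [real_inner_comm, inner_gradient_eq, hcomp, real_inner_comm, inner_gradient_eq,
      fderiv_comp x hφt hfx]
    rfl
  calc (∫ t in Set.Icc (0 : ℝ) T, ∫ y, (deriv (fun s => φ (y, s)) t +
        ⟪fderiv ℝ f (g y) (v t (g y)), gradient (fun z => φ (z, t)) y⟫) ∂((ρ t).map f))
      = ∫ t in Set.Icc (0 : ℝ) T, ∫ x, (deriv (fun s => ψ (x, s)) t +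
        ⟪v t x, gradient (fun y => ψ (y, t)) x⟫) ∂(ρ t) :=
        integral_congr_ae (Filter.Eventually.of_forall fun t => heq t)
    _ = 0 := key
end

section
/- Let f : ℝ^n → ℝ^m be continuously differentiable and injective, and suppose there exists a continuously differentiable map g : ℝ^m → ℝ^n with g(f(x)) = x for all x ∈ ℝ^n (a C¹ left inverse). Let ρ be a Borel probability measure on ℝ^n and let v, w : ℝ^n → ℝ^n be Borel measurable with ∫ (|v| + |w| + |Df_x(v(x))| + |Df_x(w(x))|) dρ < ∞. If there exists φ ∈ C_c^1(ℝ^n) with ∫_{ℝ^n} ⟨∇φ(x), v(x) − w(x)⟩ dρ(x) ≠ 0, then there exists ς ∈ C_c^1(ℝ^m) such that ∫_{ℝ^m} ⟨∇ς(y), Df_{g(y)}((v − w)(g(y)))⟩ d(f#ρ)(y) ≠ 0. -/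
open MeasureTheory
open scoped RealInnerProductSpace ENNReal

/-- Injectivity of the derivative of the pushforward map: if two vector
fields `v, w` are distinguished at `ρ` by some test function `φ ∈ C_c¹(ℝⁿ)`, then the
transported vector fields are distinguished at `f#ρ` by some test function
`ς ∈ C_c¹(ℝᵐ)`. -/
theorem pushforward_derivative_injective (n m : ℕ)
    (f : EuclideanSpace ℝ (Fin n) → EuclideanSpace ℝ (Fin m))
    (hf : ContDiff ℝ 1 f) (hinj : Function.Injective f)
    (g : EuclideanSpace ℝ (Fin m) → EuclideanSpace ℝ (Fin n))
    (hgC1 : ContDiff ℝ 1 g) (hg : ∀ x, g (f x) = x)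
    (ρ : Measure (EuclideanSpace ℝ (Fin n))) [IsProbabilityMeasure ρ]
    (v w : EuclideanSpace ℝ (Fin n) → EuclideanSpace ℝ (Fin n))
    (hv : Measurable v) (hw : Measurable w)
    (hint : (∫⁻ x, ((‖v x‖₊ : ℝ≥0∞) + (‖w x‖₊ : ℝ≥0∞) +
      (‖fderiv ℝ f x (v x)‖₊ : ℝ≥0∞) + (‖fderiv ℝ f x (w x)‖₊ : ℝ≥0∞)) ∂ρ) < ⊤)
    (hne : ∃ φ : EuclideanSpace ℝ (Fin n) → ℝ, ContDiff ℝ 1 φ ∧ HasCompactSupport φ ∧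
      ∫ x, ⟪gradient φ x, v x - w x⟫ ∂ρ ≠ 0) :
    ∃ ς : EuclideanSpace ℝ (Fin m) → ℝ, ContDiff ℝ 1 ς ∧ HasCompactSupport ς ∧
      ∫ y, ⟪gradient ς y, fderiv ℝ f (g y) (v (g y) - w (g y))⟫ ∂(ρ.map f) ≠ 0 := by
  obtain ⟨φ, hφ, hφc, hφne⟩ := hne
  -- image of the support of φ under f is compact, hence bounded
  have hK : IsCompact (f '' tsupport φ) := hφc.image hf.continuous
  obtain ⟨r, hr⟩ := hK.isBounded.subset_closedBall 0
  -- a smooth cutoff equal to 1 on a ball containing that image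
  set bump : ContDiffBump (0 : EuclideanSpace ℝ (Fin m)) :=
    ⟨max r 0 + 1, max r 0 + 2, by positivity, by linarith⟩ with hbump
  set ς : EuclideanSpace ℝ (Fin m) → ℝ := fun y => bump y * φ (g y) with hςdef
  have hς : ContDiff ℝ 1 ς := bump.contDiff.mul (hφ.comp hgC1)
  have hςc : HasCompactSupport ς := bump.hasCompactSupport.mul_right
  -- ς ∘ f = φ
  have hcomp : ς ∘ f = φ := by
    funext x
    by_cases hx : x ∈ tsupport φ
    · have hfx : f x ∈ Metric.closedBall (0 : EuclideanSpace ℝ (Fin m)) bump.rIn := by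
        have : f x ∈ Metric.closedBall (0 : EuclideanSpace ℝ (Fin m)) r :=
          hr (Set.mem_image_of_mem f hx)
        exact Metric.closedBall_subset_closedBall (by simp [hbump]; linarith [le_max_left r 0]) this
      simp [hςdef, Function.comp, bump.one_of_mem_closedBall hfx, hg]
    · simp [hςdef, Function.comp, hg, image_eq_zero_of_notMem_tsupport hx]
  refine ⟨ς, hς, hςc, ?_⟩
  -- key pointwise identity via the chain rule
  have key : ∀ x (u : EuclideanSpace ℝ (Fin n)),
      ⟪gradient ς (f x), fderiv ℝ f x u⟫ = ⟪gradient φ x, u⟫ := by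
    intro x u
    have hdς : DifferentiableAt ℝ ς (f x) := hς.differentiable one_ne_zero _
    have hdf : DifferentiableAt ℝ f x := hf.differentiable one_ne_zero _
    have hchain : fderiv ℝ (ς ∘ f) x = (fderiv ℝ ς (f x)).comp (fderiv ℝ f x) :=
      fderiv_comp x hdς hdf
    have : fderiv ℝ ς (f x) (fderiv ℝ f x u) = fderiv ℝ φ x u := by
      rw [← hcomp, hchain]; rfl
    simpa [gradient, InnerProductSpace.toDual_symm_apply] using this
  -- measurability of the integrand on the target
  have hmeas : AEStronglyMeasurable
      (fun y => ⟪gradient ς y, fderiv ℝ f (g y) (v (g y) - w (g y))⟫) (ρ.map f) := by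
    have hgrad : Continuous fun y => gradient ς y := by
      have : Continuous fun y => fderiv ℝ ς y := (hς.fderiv_right (m := 0) (by norm_num)).continuous
      exact (InnerProductSpace.toDual ℝ _).symm.continuous.comp this
    have hclm : Continuous fun y => (fderiv ℝ f (g y)) :=
      (hf.fderiv_right (m := 0) (by norm_num)).continuous.comp hgC1.continuous
    have hvec : Measurable fun y => v (g y) - w (g y) :=
      ((hv.comp hgC1.continuous.measurable).sub (hw.comp hgC1.continuous.measurable))
    have happ : Measurable fun y => fderiv ℝ f (g y) (v (g y) - w (g y)) := by
      have heval : Continuous fun p : (EuclideanSpace ℝ (Fin n) →L[ℝ] EuclideanSpace ℝ (Fin m)) ×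
          EuclideanSpace ℝ (Fin n) => p.1 p.2 := isBoundedBilinearMap_apply.continuous
      exact heval.measurable.comp (hclm.measurable.prodMk hvec)
    exact ((hgrad.measurable.inner happ)).aestronglyMeasurable
  rw [integral_map hf.continuous.measurable.aemeasurable hmeas]
  have : ∀ x, ⟪gradient ς (f x), fderiv ℝ f (g (f x)) (v (g (f x)) - w (g (f x)))⟫
      = ⟪gradient φ x, v x - w x⟫ := by
    intro x; rw [hg x]; exact key x _
  simp only [this]
  exact hφne
end

section
/- Let T > 0, let (ρ_t)_{t∈[0,T]} be Borel probability measures on ℝ^n, and let v : [0,T] × ℝ^n → ℝ^n be a Borel vector field with v(t,·) ∈ L²(ρ_t; ℝ^n) for a.e. t and ∫_0^T ‖v(t,·)‖_{L²(ρ_t)} dt < ∞, such that (ρ_t, v) satisfies the weak continuity equation. Let u : [0,T] × ℝ^n → ℝ^n be a Borel vector field such that for a.e. t ∈ [0,T], u(t,·) equals, as an element of L²(ρ_t; ℝ^n), the orthogonal projection of v(t,·) onto the closure T_{ρ_t} in L²(ρ_t; ℝ^n) of {∇φ : φ ∈ C_c^∞(ℝ^n)}. Then (ρ_t, u) also satisfies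 the weak continuity equation. -/
open MeasureTheory
open scoped RealInnerProductSpace ENNReal

section Aux
open InnerProductSpace
open scoped Convolution

variable {n : ℕ}

local notation "E" => EuclideanSpace ℝ (Fin n)
local notation "lsmulE" => (ContinuousLinearMap.lsmul ℝ ℝ : ℝ →L[ℝ] (EuclideanSpace ℝ (Fin n)) →L[ℝ] (EuclideanSpace ℝ (Fin n)))

lemma gradient_continuous_of_contDiff (f : E → ℝ) (hf : ContDiff ℝ 1 f) :
    Continuous (gradient f) :=
  (toDual ℝ E).symm.continuous.comp (hf.continuous_fderiv one_ne_zero)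

lemma gradient_hasCompactSupport (f : E → ℝ) (hsupp : HasCompactSupport f) :
    HasCompactSupport (gradient f) :=
  (hsupp.fderiv ℝ).comp_left (g := (toDual ℝ E).symm) (map_zero _)

lemma gradient_bump_convolution (c : ContDiffBump (0 : E))
    (f : E → ℝ) (hf : ContDiff ℝ 1 f) (hsupp : HasCompactSupport f) (x : E) :
    gradient (c.normed volume ⋆[ContinuousLinearMap.lsmul ℝ ℝ, volume] f) x
      = (c.normed volume ⋆[lsmulE, volume] gradient f) x := by
  have hk : MeasureTheory.LocallyIntegrable (c.normed volume) volume :=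
    c.integrable_normed.locallyIntegrable
  have hF := hsupp.hasFDerivAt_convolution_right (ContinuousLinearMap.lsmul ℝ ℝ) hk hf x
  have hG := hF.hasGradientAt
  rw [hG.gradient]
  have hgc : Continuous (gradient f) := gradient_continuous_of_contDiff f hf
  have hI : MeasureTheory.Integrable (fun y => c.normed volume y • gradient f (x - y)) volume := by
    apply Continuous.integrable_of_hasCompactSupport
    · exact c.continuous_normed.smul (hgc.comp (continuous_const.sub continuous_id))
    · exact HasCompactSupport.intro c.hasCompactSupport_normed fun y hy => by
        rw [image_eq_zero_of_notMem_tsupport hy, zero_smul]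
  have key : (c.normed volume ⋆[ContinuousLinearMap.precompR (EuclideanSpace ℝ (Fin n))
        (ContinuousLinearMap.lsmul ℝ ℝ), volume] fderiv ℝ f) x
      = toDual ℝ E ((c.normed volume ⋆[lsmulE, volume] gradient f) x) := by
    ext w
    have hprec := convolution_precompR_apply (ContinuousLinearMap.lsmul ℝ ℝ) hk
      (hsupp.fderiv ℝ) (hf.continuous_fderiv one_ne_zero) x w
    rw [hprec]
    calc (c.normed volume ⋆[ContinuousLinearMap.lsmul ℝ ℝ, volume] fun a => fderiv ℝ f a w) x
        = ∫ y, c.normed volume y • (fderiv ℝ f (x - y) w) ∂volume := by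
          rw [convolution_def]; rfl
      _ = ∫ y, ⟪w, c.normed volume y • gradient f (x - y)⟫ ∂volume := by
          congr 1; ext y
          rw [real_inner_smul_right, real_inner_comm]
          have : ⟪gradient f (x - y), w⟫ = fderiv ℝ f (x - y) w := toDual_symm_apply
          rw [this, smul_eq_mul]
      _ = ⟪w, ∫ y, c.normed volume y • gradient f (x - y) ∂volume⟫ := by
          have h2 := (innerSL ℝ w).integral_comp_comm hI
          exact h2
      _ = ⟪(c.normed volume ⋆[lsmulE, volume] gradient f) x, w⟫ := by
          rw [real_inner_comm, convolution_def]; rfl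
      _ = toDual ℝ E ((c.normed volume ⋆[lsmulE, volume] gradient f) x) w := by
          rw [toDual_apply_apply]
  rw [key, LinearIsometryEquiv.symm_apply_apply]

lemma toLp_gradient_mem_closure (μ : Measure E) [IsProbabilityMeasure μ]
    (f : E → ℝ) (hf : ContDiff ℝ 1 f) (hsupp : HasCompactSupport f)
    (hmem : MemLp (gradient f) 2 μ) :
    hmem.toLp (gradient f) ∈ closure {g : Lp (EuclideanSpace ℝ (Fin n)) 2 μ |
      ∃ φ : EuclideanSpace ℝ (Fin n) → ℝ, ContDiff ℝ (⊤ : ℕ∞) φ ∧ HasCompactSupport φ ∧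
        ⇑g =ᵐ[μ] gradient φ} := by
  rw [Metric.mem_closure_iff]
  intro ε hε
  have hgc : Continuous (gradient f) := gradient_continuous_of_contDiff f hf
  have hgs : HasCompactSupport (gradient f) := gradient_hasCompactSupport f hsupp
  have hu : UniformContinuous (gradient f) := hgs.uniformContinuous_of_continuous hgc
  obtain ⟨δ, hδ, hδ'⟩ := Metric.uniformContinuous_iff.mp hu (ε/2) (half_pos hε)
  set c : ContDiffBump (0 : E) := ⟨δ/2, δ, half_pos hδ, half_lt_self hδ⟩ with hc
  set ψ := c.normed volume ⋆[ContinuousLinearMap.lsmul ℝ ℝ, volume] f with hψ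
  have hψsm : ContDiff ℝ (⊤ : ℕ∞) ψ :=
    c.hasCompactSupport_normed.contDiff_convolution_left _ c.contDiff_normed
      (hf.continuous.locallyIntegrable)
  have hψs : HasCompactSupport ψ := c.hasCompactSupport_normed.convolution _ hsupp
  have hgrad : ∀ x, gradient ψ x = (c.normed volume ⋆[lsmulE, volume] gradient f) x :=
    gradient_bump_convolution c f hf hsupp
  -- pointwise bound
  have hbound : ∀ x, ‖gradient ψ x - gradient f x‖ ≤ ε/2 := by
    intro x
    rw [← dist_eq_norm, hgrad x]
    refine c.dist_normed_convolution_le hgc.aestronglyMeasurable fun y hy => ?_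
    exact (hδ' (by simpa [hc, dist_comm] using Metric.mem_ball.mp hy)).le
  have hψgc : Continuous (gradient ψ) := gradient_continuous_of_contDiff ψ (hψsm.of_le (by exact_mod_cast le_top))
  have hψgs : HasCompactSupport (gradient ψ) := gradient_hasCompactSupport ψ hψs
  have hψmem : MemLp (gradient ψ) 2 μ := hψgc.memLp_of_hasCompactSupport hψgs
  refine ⟨hψmem.toLp (gradient ψ), ⟨ψ, hψsm, hψs, hψmem.coeFn_toLp⟩, ?_⟩
  have hsub : hmem.toLp (gradient f) - hψmem.toLp (gradient ψ)
      = (hmem.sub hψmem).toLp (gradient f - gradient ψ) := (MemLp.toLp_sub hmem hψmem).symm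
  rw [dist_eq_norm, hsub, Lp.norm_toLp]
  have hle : eLpNorm (gradient f - gradient ψ) 2 μ ≤ ENNReal.ofReal (ε/2) := by
    have := eLpNorm_le_of_ae_bound (μ := μ) (p := 2)
      (f := gradient f - gradient ψ) (C := ε/2)
      (Filter.Eventually.of_forall fun x => by
        simpa [Pi.sub_apply, norm_sub_rev] using hbound x)
    simpa using this
  calc (eLpNorm (gradient f - gradient ψ) 2 μ).toReal
      ≤ (ENNReal.ofReal (ε/2)).toReal := ENNReal.toReal_mono ENNReal.ofReal_ne_top hle
    _ = ε/2 := ENNReal.toReal_ofReal (le_of_lt (half_pos hε))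
    _ < ε := half_lt_self hε
end Aux

/-- Replacing, for a.e. `t`, the driving velocity field `v(t,·)` of a
solution of the weak continuity equation by its orthogonal projection `u(t,·)` onto the
Wasserstein tangent space `T_{ρ_t}` (the `L²(ρ_t)`-closure of gradients of smooth compactly
supported functions) preserves the weak continuity equation. -/
theorem continuity_equation_of_tangent_projection (n : ℕ) (T : ℝ) (hT : 0 < T)
    (ρ : ℝ → Measure (EuclideanSpace ℝ (Fin n)))
    (hρ : ∀ t, IsProbabilityMeasure (ρ t))
    (Tt : ∀ t : ℝ, Submodule ℝ (Lp (EuclideanSpace ℝ (Fin n)) 2 (ρ t)))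
    (hTt : ∀ t, (Tt t : Set (Lp (EuclideanSpace ℝ (Fin n)) 2 (ρ t))) =
      closure {g : Lp (EuclideanSpace ℝ (Fin n)) 2 (ρ t) |
        ∃ φ : EuclideanSpace ℝ (Fin n) → ℝ, ContDiff ℝ (⊤ : ℕ∞) φ ∧ HasCompactSupport φ ∧
          ⇑g =ᵐ[ρ t] gradient φ})
    (hcomp : ∀ t, CompleteSpace (Tt t))
    (v u : ℝ → EuclideanSpace ℝ (Fin n) → EuclideanSpace ℝ (Fin n))
    (hv : Measurable (Function.uncurry v)) (hu : Measurable (Function.uncurry u))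
    (hvL2 : ∀ᵐ t ∂(volume.restrict (Set.Icc (0 : ℝ) T)), MemLp (v t) 2 (ρ t))
    (hvint : (∫⁻ t in Set.Icc (0 : ℝ) T, eLpNorm (v t) 2 (ρ t)) < ⊤)
    (hCE : WeakContinuityEquation n T ρ v)
    (hproj : ∀ᵐ t ∂(volume.restrict (Set.Icc (0 : ℝ) T)),
      ∃ (hvt : MemLp (v t) 2 (ρ t)) (hut : MemLp (u t) 2 (ρ t)),
        haveI := hcomp t
        hut.toLp (u t) =
          (Submodule.orthogonalProjectionOnto (Tt t) (hvt.toLp (v t)) :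
            Lp (EuclideanSpace ℝ (Fin n)) 2 (ρ t))) :
    WeakContinuityEquation n T ρ u := by
  intro φ hφ hφc hφs
  refine Eq.trans (MeasureTheory.integral_congr_ae ?_) (hCE φ hφ hφc hφs)
  filter_upwards [hproj] with t ht
  obtain ⟨hvt, hut, heq⟩ := ht
  haveI := hρ t
  haveI := hcomp t
  -- the slice of φ at time t
  set f : EuclideanSpace ℝ (Fin n) → ℝ := fun y => φ (y, t) with hfdef
  have hf1 : ContDiff ℝ 1 f := hφ.comp (contDiff_id.prodMk contDiff_const)
  have hK : IsCompact (Prod.fst '' tsupport φ) := hφc.image continuous_fst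
  have hfs : HasCompactSupport f :=
    HasCompactSupport.intro hK fun y hy =>
      image_eq_zero_of_notMem_tsupport (f := φ) fun h => hy ⟨(y, t), h, rfl⟩
  set g : EuclideanSpace ℝ (Fin n) → EuclideanSpace ℝ (Fin n) := gradient f with hgdef
  have hgc : Continuous g := gradient_continuous_of_contDiff f hf1
  have hgs : HasCompactSupport g := gradient_hasCompactSupport f hfs
  have hgmem : MemLp g 2 (ρ t) := hgc.memLp_of_hasCompactSupport hgs
  -- the time-derivative term is integrable
  have hder : ∀ x : EuclideanSpace ℝ (Fin n),
      deriv (fun s => φ (x, s)) t = fderiv ℝ φ (x, t) (0, 1) := fun x =>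
    (((hφ.differentiable one_ne_zero) (x, t)).hasFDerivAt.comp_hasDerivAt t
      ((hasDerivAt_const t x).prodMk (hasDerivAt_id t))).deriv
  have hAc : Continuous fun x : EuclideanSpace ℝ (Fin n) => deriv (fun s => φ (x, s)) t := by
    have : Continuous fun x : EuclideanSpace ℝ (Fin n) => fderiv ℝ φ (x, t) (0, 1) :=
      (ContinuousLinearMap.apply ℝ ℝ ((0 : EuclideanSpace ℝ (Fin n)), (1 : ℝ))).continuous.comp
        ((hφ.continuous_fderiv one_ne_zero).comp (continuous_id.prodMk continuous_const))
    exact this.congr fun x => (hder x).symm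
  have hAs : HasCompactSupport fun x : EuclideanSpace ℝ (Fin n) => deriv (fun s => φ (x, s)) t := by
    refine HasCompactSupport.intro hK fun x hx => ?_
    have hzero : (fun s => φ (x, s)) = fun _ => 0 := funext fun s =>
      image_eq_zero_of_notMem_tsupport fun h => hx ⟨(x, s), h, rfl⟩
    rw [hzero, deriv_const]
  have hA : Integrable (fun x => deriv (fun s => φ (x, s)) t) (ρ t) :=
    hAc.integrable_of_hasCompactSupport hAs
  -- inner product terms are integrable
  have hBv : Integrable (fun x => ⟪v t x, g x⟫) (ρ t) := by
    refine (MeasureTheory.L2.integrable_inner (𝕜 := ℝ) (hvt.toLp (v t)) (hgmem.toLp g)).congr ?_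
    filter_upwards [hvt.coeFn_toLp, hgmem.coeFn_toLp] with x h1 h2
    rw [h1, h2]
  have hBu : Integrable (fun x => ⟪u t x, g x⟫) (ρ t) := by
    refine (MeasureTheory.L2.integrable_inner (𝕜 := ℝ) (hut.toLp (u t)) (hgmem.toLp g)).congr ?_
    filter_upwards [hut.coeFn_toLp, hgmem.coeFn_toLp] with x h1 h2
    rw [h1, h2]
  -- the key orthogonality identity
  have hgTt : hgmem.toLp g ∈ Tt t := by
    rw [← SetLike.mem_coe, hTt t]
    exact toLp_gradient_mem_closure (ρ t) f hf1 hfs hgmem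
  have horth : ⟪hvt.toLp (v t) - hut.toLp (u t), hgmem.toLp g⟫ = 0 := by
    rw [heq]
    exact Submodule.starProjection_inner_eq_zero (hvt.toLp (v t)) _ hgTt
  have hkey : ∫ x, ⟪u t x, g x⟫ ∂(ρ t) = ∫ x, ⟪v t x, g x⟫ ∂(ρ t) := by
    have hsub : ⟪hvt.toLp (v t), hgmem.toLp g⟫ = ⟪hut.toLp (u t), hgmem.toLp g⟫ := by
      have h2 := horth
      rw [inner_sub_left, sub_eq_zero] at h2
      exact h2
    have hv' : ⟪hvt.toLp (v t), hgmem.toLp g⟫ = ∫ x, ⟪v t x, g x⟫ ∂(ρ t) := by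
      rw [MeasureTheory.L2.inner_def]
      apply MeasureTheory.integral_congr_ae
      filter_upwards [hvt.coeFn_toLp, hgmem.coeFn_toLp] with x h1 h2
      rw [h1, h2]
    have hu' : ⟪hut.toLp (u t), hgmem.toLp g⟫ = ∫ x, ⟪u t x, g x⟫ ∂(ρ t) := by
      rw [MeasureTheory.L2.inner_def]
      apply MeasureTheory.integral_congr_ae
      filter_upwards [hut.coeFn_toLp, hgmem.coeFn_toLp] with x h1 h2
      rw [h1, h2]
    rw [← hv', ← hu', hsub]
  calc ∫ x, (deriv (fun s => φ (x, s)) t + ⟪u t x, gradient (fun y => φ (y, t)) x⟫) ∂(ρ t)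
      = (∫ x, deriv (fun s => φ (x, s)) t ∂(ρ t)) + ∫ x, ⟪u t x, g x⟫ ∂(ρ t) :=
        integral_add hA hBu
    _ = (∫ x, deriv (fun s => φ (x, s)) t ∂(ρ t)) + ∫ x, ⟪v t x, g x⟫ ∂(ρ t) := by rw [hkey]
    _ = ∫ x, (deriv (fun s => φ (x, s)) t + ⟪v t x, gradient (fun y => φ (y, t)) x⟫) ∂(ρ t) :=
        (integral_add hA hBv).symm
end
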